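/- arXiv:1412.0537 — 2 statements merged into one kernel-verified Lean document; each statement's English description precedes it below -/
import Mathlib

section
/- A nondeterministic SST T is functional if and only if the biSST T ⊗ T is diagonal. -/
namespace SSTPaper

/-- Homomorphic extension of a substitution, fixing output letters. -/
def ext {X Γ : Type} (σ : X → List (Γ ⊕ X)) : List (Γ ⊕ X) → List (Γ ⊕ X) :=
  fun w => w.flatMap (Sum.elim (fun g => [Sum.inl g]) σ)

/-- Composition of substitutions: (σ1 σ2)(x) = σ̂1(σ2 x). -/
def comp {X Γ : Type} (σ1 σ2 : X → List (Γ ⊕ X)) : X → List (Γ ⊕ X) :=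
  fun x => ext σ1 (σ2 x)

/-- The identity substitution. -/
def idSubst {X Γ : Type} : X → List (Γ ⊕ X) := fun x => [Sum.inr x]

end SSTPaper

namespace SSTPaper

/-- Erase variables and keep output letters, after applying σ to a variable word:
    this computes σ_ε σ (xs). -/
def evalOut {X Γ : Type} (σ : X → List (Γ ⊕ X)) (xs : List X) : List Γ :=
  (xs.flatMap σ).filterMap (Sum.elim some (fun _ => none))

/-- Nondeterministic streaming string transducer. -/
structure NSST (S Γ Q X : Type) where
  init : Q
  final : Q → Prop
  delta : Q → S → Q → Prop
  rho : Q → S → Q → X → List (Γ ⊕ X)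
  out : Q → List X

/-- Nondeterministic biSST: like an SST but outputs a pair of variable words. -/
structure BiSST (S Γ Q X : Type) where
  init : Q
  final : Q → Prop
  delta : Q → S → Q → Prop
  rho : Q → S → Q → X → List (Γ ⊕ X)
  out : Q → List X × List X

/-- Runs of an SST, together with the induced substitution
    σ_r = ρ(t₁) ρ(t₂) ⋯ ρ(t_n) (left-to-right composition). -/
inductive Run {S Γ Q X : Type} (T : NSST S Γ Q X) :
    Q → List S → Q → (X → List (Γ ⊕ X)) → Prop
  | nil (q : Q) : Run T q [] q idSubst
  | cons {q q' q'' : Q} {a : S} {w : List S} {σ : X → List (Γ ⊕ X)} :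
      T.delta q a q' → Run T q' w q'' σ →
      Run T q (a :: w) q'' (comp (T.rho q a q') σ)

/-- Runs of a biSST, with induced substitution. -/
inductive BiRun {S Γ Q X : Type} (T : BiSST S Γ Q X) :
    Q → List S → Q → (X → List (Γ ⊕ X)) → Prop
  | nil (q : Q) : BiRun T q [] q idSubst
  | cons {q q' q'' : Q} {a : S} {w : List S} {σ : X → List (Γ ⊕ X)} :
      T.delta q a q' → BiRun T q' w q'' σ →
      BiRun T q (a :: w) q'' (comp (T.rho q a q') σ)

/-- The relation ⟦T⟧ ⊆ Σ* × Γ* defined by a nondeterministic SST. -/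
def NSST.Rel {S Γ Q X : Type} (T : NSST S Γ Q X) (w : List S) (o : List Γ) : Prop :=
  ∃ q σ, Run T T.init w q σ ∧ T.final q ∧ o = evalOut σ (T.out q)

/-- The relation defined by a biSST (input, pair of outputs). -/
def BiSST.Rel {S Γ Q X : Type} (T : BiSST S Γ Q X) (w : List S)
    (o : List Γ × List Γ) : Prop :=
  ∃ q σ, BiRun T T.init w q σ ∧ T.final q ∧
    o.1 = evalOut σ (T.out q).1 ∧ o.2 = evalOut σ (T.out q).2

/-- Domain of an SST. -/
def NSST.Dom {S Γ Q X : Type} (T : NSST S Γ Q X) : Set (List S) :=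
  {w | ∃ o, T.Rel w o}

/-- Domain of a biSST. -/
def BiSST.Dom {S Γ Q X : Type} (T : BiSST S Γ Q X) : Set (List S) :=
  {w | ∃ o, T.Rel w o}

/-- A biSST is diagonal if every output pair has equal components. -/
def BiSST.Diagonal {S Γ Q X : Type} (T : BiSST S Γ Q X) : Prop :=
  ∀ w o₁ o₂, T.Rel w (o₁, o₂) → o₁ = o₂

/-- A nondeterministic SST is functional if it defines a partial function. -/
def NSST.Functional {S Γ Q X : Type} (T : NSST S Γ Q X) : Prop :=
  ∀ w o₁ o₂, T.Rel w o₁ → T.Rel w o₂ → o₁ = o₂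

/-- Determinism of a transition relation. -/
def DetRel {Q S : Type} (δ : Q → S → Q → Prop) : Prop :=
  ∀ q a q₁ q₂, δ q a q₁ → δ q a q₂ → q₁ = q₂

/-- Rename variables inside a word over Γ ∪ X. -/
def mapV {Γ X X' : Type} (f : X → X') : List (Γ ⊕ X) → List (Γ ⊕ X') :=
  List.map (Sum.map id f)

/-- Synchronized product of two nondeterministic SSTs, as a biSST. -/
def prodSST {S Γ Q₁ Q₂ X₁ X₂ : Type} (T₁ : NSST S Γ Q₁ X₁) (T₂ : NSST S Γ Q₂ X₂) :
    BiSST S Γ (Q₁ × Q₂) (X₁ ⊕ X₂) where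
  init := (T₁.init, T₂.init)
  final := fun p => T₁.final p.1 ∧ T₂.final p.2
  delta := fun p a p' => T₁.delta p.1 a p'.1 ∧ T₂.delta p.2 a p'.2
  rho := fun p a p' =>
    Sum.elim (fun x₁ => mapV Sum.inl (T₁.rho p.1 a p'.1 x₁))
             (fun x₂ => mapV Sum.inr (T₂.rho p.2 a p'.2 x₂))
  out := fun p => ((T₁.out p.1).map Sum.inl, (T₂.out p.2).map Sum.inr)

end SSTPaper

namespace SSTPaper

/-- Pair two substitutions into a substitution on the sum of variables. -/
def pairSubst {X₁ X₂ Γ : Type} (σ₁ : X₁ → List (Γ ⊕ X₁)) (σ₂ : X₂ → List (Γ ⊕ X₂)) :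
    (X₁ ⊕ X₂) → List (Γ ⊕ (X₁ ⊕ X₂)) :=
  Sum.elim (fun x => mapV Sum.inl (σ₁ x)) (fun x => mapV Sum.inr (σ₂ x))

lemma ext_pair_inl {X₁ X₂ Γ : Type} (σ₁ : X₁ → List (Γ ⊕ X₁)) (σ₂ : X₂ → List (Γ ⊕ X₂))
    (w : List (Γ ⊕ X₁)) :
    ext (pairSubst σ₁ σ₂) (mapV Sum.inl w) = mapV Sum.inl (ext σ₁ w) := by
  induction w with
  | nil => rfl
  | cons a t ih =>
    cases a <;>
      simp [ext, mapV, pairSubst, List.flatMap_cons] at ih ⊢ <;>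
      exact ih

lemma ext_pair_inr {X₁ X₂ Γ : Type} (σ₁ : X₁ → List (Γ ⊕ X₁)) (σ₂ : X₂ → List (Γ ⊕ X₂))
    (w : List (Γ ⊕ X₂)) :
    ext (pairSubst σ₁ σ₂) (mapV Sum.inr w) = mapV Sum.inr (ext σ₂ w) := by
  induction w with
  | nil => rfl
  | cons a t ih =>
    cases a <;>
      simp [ext, mapV, pairSubst, List.flatMap_cons] at ih ⊢ <;>
      exact ih

lemma pairSubst_id {X₁ X₂ Γ : Type} :
    pairSubst (idSubst (X := X₁) (Γ := Γ)) (idSubst (X := X₂) (Γ := Γ)) = idSubst := by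
  funext x; cases x <;> rfl

lemma pairSubst_comp {X₁ X₂ Γ : Type} (ρ₁ σ₁ : X₁ → List (Γ ⊕ X₁))
    (ρ₂ σ₂ : X₂ → List (Γ ⊕ X₂)) :
    comp (pairSubst ρ₁ ρ₂) (pairSubst σ₁ σ₂) = pairSubst (comp ρ₁ σ₁) (comp ρ₂ σ₂) := by
  funext x
  cases x with
  | inl x => exact ext_pair_inl ρ₁ ρ₂ (σ₁ x)
  | inr x => exact ext_pair_inr ρ₁ ρ₂ (σ₂ x)

lemma filterMap_mapV {Γ X X' : Type} (f : X → X') (l : List (Γ ⊕ X)) :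
    (mapV f l).filterMap (Sum.elim some (fun _ => none)) =
      l.filterMap (Sum.elim some (fun _ => none)) := by
  induction l with
  | nil => rfl
  | cons a t ih =>
    cases a <;> simp only [mapV, List.map_cons] at ih ⊢ <;>
      rw [List.filterMap_cons, List.filterMap_cons, ih] <;> rfl

lemma evalOut_pair_inl {X₁ X₂ Γ : Type} (σ₁ : X₁ → List (Γ ⊕ X₁))
    (σ₂ : X₂ → List (Γ ⊕ X₂)) (xs : List X₁) :
    evalOut (pairSubst σ₁ σ₂) (xs.map Sum.inl) = evalOut σ₁ xs := by
  induction xs with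
  | nil => rfl
  | cons x t ih =>
    simp only [evalOut, List.map_cons, List.flatMap_cons, List.filterMap_append] at ih ⊢
    rw [ih]
    congr 1
    exact filterMap_mapV Sum.inl (σ₁ x)

lemma evalOut_pair_inr {X₁ X₂ Γ : Type} (σ₁ : X₁ → List (Γ ⊕ X₁))
    (σ₂ : X₂ → List (Γ ⊕ X₂)) (xs : List X₂) :
    evalOut (pairSubst σ₁ σ₂) (xs.map Sum.inr) = evalOut σ₂ xs := by
  induction xs with
  | nil => rfl
  | cons x t ih =>
    simp only [evalOut, List.map_cons, List.flatMap_cons, List.filterMap_append] at ih ⊢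
    rw [ih]
    congr 1
    exact filterMap_mapV Sum.inr (σ₂ x)

lemma prod_rho_eq {S Γ Q X : Type} (T : NSST S Γ Q X) (p : Q × Q) (a : S) (p' : Q × Q) :
    (prodSST T T).rho p a p' =
      pairSubst (T.rho p.1 a p'.1) (T.rho p.2 a p'.2) := rfl

lemma runs_to_birun {S Γ Q X : Type} (T : NSST S Γ Q X) {q₁ q₁' q₂ q₂' : Q}
    {w : List S} {σ₁ σ₂ : X → List (Γ ⊕ X)}
    (h₁ : Run T q₁ w q₁' σ₁) (h₂ : Run T q₂ w q₂' σ₂) :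
    BiRun (prodSST T T) (q₁, q₂) w (q₁', q₂') (pairSubst σ₁ σ₂) := by
  induction h₁ generalizing q₂ σ₂ with
  | nil q =>
    cases h₂
    rw [pairSubst_id]
    exact BiRun.nil _
  | @cons p p' p'' a v τ hd hr ih =>
    cases h₂ with
    | @cons _ r' _ _ _ τ₂ hd₂ hr₂ =>
      rw [← pairSubst_comp]
      exact BiRun.cons (T := prodSST T T) (q' := (p', r')) ⟨hd, hd₂⟩ (ih hr₂)

lemma birun_to_runs {S Γ Q X : Type} (T : NSST S Γ Q X) {p p' : Q × Q}
    {w : List S} {σ : (X ⊕ X) → List (Γ ⊕ (X ⊕ X))}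
    (h : BiRun (prodSST T T) p w p' σ) :
    ∃ σ₁ σ₂, Run T p.1 w p'.1 σ₁ ∧ Run T p.2 w p'.2 σ₂ ∧ σ = pairSubst σ₁ σ₂ := by
  induction h with
  | nil q =>
    exact ⟨idSubst, idSubst, Run.nil _, Run.nil _, (pairSubst_id).symm⟩
  | @cons p p' p'' a v τ hd hr ih =>
    obtain ⟨σ₁, σ₂, h₁, h₂, rfl⟩ := ih
    exact ⟨_, _, Run.cons hd.1 h₁, Run.cons hd.2 h₂,
      by rw [prod_rho_eq, pairSubst_comp]⟩

lemma prod_rel_iff {S Γ Q X : Type} (T : NSST S Γ Q X) (w : List S) (o : List Γ × List Γ) :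
    (prodSST T T).Rel w o ↔ T.Rel w o.1 ∧ T.Rel w o.2 := by
  constructor
  · rintro ⟨q, σ, hr, hf, h1, h2⟩
    obtain ⟨σ₁, σ₂, hr₁, hr₂, rfl⟩ := birun_to_runs T hr
    refine ⟨⟨q.1, σ₁, hr₁, hf.1, ?_⟩, ⟨q.2, σ₂, hr₂, hf.2, ?_⟩⟩
    · rw [h1]; exact evalOut_pair_inl σ₁ σ₂ (T.out q.1)
    · rw [h2]; exact evalOut_pair_inr σ₁ σ₂ (T.out q.2)
  · rintro ⟨⟨q₁, σ₁, hr₁, hf₁, ho₁⟩, ⟨q₂, σ₂, hr₂, hf₂, ho₂⟩⟩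
    refine ⟨(q₁, q₂), pairSubst σ₁ σ₂, runs_to_birun T hr₁ hr₂, ⟨hf₁, hf₂⟩, ?_, ?_⟩
    · rw [ho₁]; exact (evalOut_pair_inl σ₁ σ₂ (T.out q₁)).symm
    · rw [ho₂]; exact (evalOut_pair_inr σ₁ σ₂ (T.out q₂)).symm

/-- A nondeterministic SST T is functional iff T ⊗ T is diagonal. -/
theorem functional_iff_diagonal {S Γ Q X : Type} (T : NSST S Γ Q X) :
    T.Functional ↔ (prodSST T T).Diagonal := by
  constructor
  · intro hf w o₁ o₂ h
    rw [prod_rel_iff] at h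
    exact hf w o₁ o₂ h.1 h.2
  · intro hd w o₁ o₂ h₁ h₂
    exact hd w o₁ o₂ ((prod_rel_iff T w (o₁, o₂)).2 ⟨h₁, h₂⟩)

end SSTPaper
end

section
/- For any HDT0L instance I, the two SSTs T1, T2 constructed from I are equivalent if and only if I is valid, i.e., h(h_{i1}(… h_{ik}(v)…)) = g(g_{i1}(… g_{ik}(w)…)) for all finite sequences i1,…,ik over {1,…,n}. -/
namespace SSTPaper

/-- Apply a monoid morphism (given by its action on letters) to a word. -/
def mapply {A B : Type} (f : A → List B) (w : List A) : List B := w.flatMap f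

/-- Value h(h_{i₁}( … h_{i_k}(v) … )) of an HDT0L instance on an index sequence. -/
def hdtVal {A B : Type} {n : ℕ} (hs : Fin n → A → List A) (h : A → List B)
    (l : List (Fin n)) (v : List A) : List B :=
  mapply h (l.foldr (fun i w => mapply (hs i) w) v)

/-- Validity of an HDT0L instance. -/
def HDT0LValid {A B : Type} {n : ℕ} (hs gs : Fin n → A → List A)
    (h g : A → List B) (v w : List A) : Prop :=
  ∀ l : List (Fin n), hdtVal hs h l v = hdtVal gs g l w

end SSTPaper

namespace SSTPaper

/-- The SST constructed from (one side of) an HDT0L instance: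
    states q₀ = false, q₁ = true, input alphabet {0} ∪ {1,…,n} modeled as
    Option (Fin n) (none is the letter 0), variables X_a for a ∈ A. -/
def hdtSST {A B : Type} {n : ℕ} (hs : Fin n → A → List A) (h : A → List B)
    (v : List A) : NSST (Option (Fin n)) B Bool A where
  init := false
  final := fun q => q = true
  delta := fun q s q' =>
    (q = false ∧ s = none ∧ q' = true) ∨ (q = true ∧ (∃ i, s = some i) ∧ q' = true)
  rho := fun _ s _ =>
    match s with
    | none => fun a => (h a).map Sum.inl
    | some i => fun a => (hs i a).map Sum.inr
  out := fun _ => v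

end SSTPaper

namespace SSTPaper

/-- The word obtained from a single letter by applying hs i for i in l. -/
def Fl {A : Type} {n : ℕ} (hs : Fin n → A → List A) (l : List (Fin n)) (a : A) :
    List A :=
  l.foldr (fun i w => mapply (hs i) w) [a]

lemma foldr_eq_flatMap_Fl {A : Type} {n : ℕ} (hs : Fin n → A → List A)
    (l : List (Fin n)) (v : List A) :
    l.foldr (fun i w => mapply (hs i) w) v = v.flatMap (Fl hs l) := by
  induction l with
  | nil => exact (List.flatMap_singleton' v).symm
  | cons i l ih =>
      rw [List.foldr_cons, ih, mapply, List.flatMap_assoc]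
      rfl

lemma ext_map_inr {X Γ : Type} (σ : X → List (Γ ⊕ X)) (ys : List X) :
    ext σ (ys.map Sum.inr) = ys.flatMap σ := by
  simp [ext, List.flatMap_map]

lemma subst_step {A B : Type} {n : ℕ} (hs : Fin n → A → List A) (i : Fin n)
    (l : List (Fin n)) (x : A) :
    ext (fun a => (hs i a).map (Sum.inr : A → B ⊕ A))
        ((Fl hs l x).map Sum.inr) = (Fl hs (i :: l) x).map Sum.inr := by
  rw [ext_map_inr]
  show _ = (mapply (hs i) (Fl hs l x)).map Sum.inr
  rw [mapply, List.map_flatMap]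

/-- Substitution induced by a run from state `true` on `l.map some`. -/
lemma runTrue_subst {A B : Type} {n : ℕ} (hs : Fin n → A → List A)
    (h : A → List B) (v : List A) {q0 : Bool} {u : List (Option (Fin n))}
    {q : Bool} {σ : A → List (B ⊕ A)}
    (hr : Run (hdtSST hs h v) q0 u q σ) (hq0 : q0 = true) :
    ∃ l : List (Fin n), u = l.map some ∧ q = true ∧
      σ = fun a => (Fl hs l a).map Sum.inr := by
  induction hr with
  | nil q =>
      refine ⟨[], rfl, hq0, ?_⟩
      funext a
      simp [idSubst, Fl]
  | @cons p p' p'' a u σ hδ hr ih =>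
      subst hq0
      rcases hδ with ⟨hq, _, _⟩ | ⟨_, ⟨i, hi⟩, hq'⟩
      · exact absurd hq (by simp)
      · obtain ⟨l, hu, hq'', hσ⟩ := ih hq'
        refine ⟨i :: l, by simp [hu, hi], hq'', ?_⟩
        subst hσ hi hq'
        funext x
        show ext ((hdtSST hs h v).rho true (some i) true)
          ((Fl hs l x).map Sum.inr) = _
        exact subst_step hs i l x

/-- Existence of the run from state `true` on `l.map some`. -/
lemma runTrue_exists {A B : Type} {n : ℕ} (hs : Fin n → A → List A)
    (h : A → List B) (v : List A) (l : List (Fin n)) :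
    Run (hdtSST hs h v) true (l.map some) true
      (fun a => (Fl hs l a).map Sum.inr) := by
  induction l with
  | nil =>
      have : (fun a : A => (Fl hs [] a).map (Sum.inr : A → B ⊕ A)) = idSubst := by
        funext a; simp [idSubst, Fl]
      rw [this]
      exact Run.nil true
  | cons i l ih =>
      have key := Run.cons (T := hdtSST hs h v)
        (q := true) (q' := true) (a := some i)
        (Or.inr ⟨rfl, ⟨i, rfl⟩, rfl⟩) ih
      have hcomp : comp ((hdtSST hs h v).rho true (some i) true)
          (fun a => (Fl hs l a).map Sum.inr) =
          fun a => (Fl hs (i :: l) a).map Sum.inr := by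
        funext x
        exact subst_step hs i l x
      rw [hcomp] at key
      exact key

lemma comp_none {A B : Type} {n : ℕ} (hs : Fin n → A → List A)
    (h : A → List B) (v : List A) (l : List (Fin n)) :
    comp ((hdtSST hs h v).rho false none true)
        (fun a => (Fl hs l a).map Sum.inr) =
      fun x => (mapply h (Fl hs l x)).map Sum.inl := by
  funext x
  show ext (fun a => (h a).map Sum.inl) ((Fl hs l x).map Sum.inr) = _
  rw [ext_map_inr, mapply, List.map_flatMap]

lemma evalOut_inl {A B : Type} (f : A → List B) (v : List A) :
    evalOut (fun x => (f x).map (Sum.inl : B → B ⊕ A)) v = v.flatMap f := by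
  unfold evalOut
  rw [show (fun x => (f x).map (Sum.inl : B → B ⊕ A)) =
    fun x => List.map Sum.inl (f x) from rfl, ← List.map_flatMap]
  induction (v.flatMap f) with
  | nil => rfl
  | cons b ys ih => simp [ih]

lemma hdtVal_eq {A B : Type} {n : ℕ} (hs : Fin n → A → List A)
    (h : A → List B) (v : List A) (l : List (Fin n)) :
    hdtVal hs h l v = v.flatMap (fun x => mapply h (Fl hs l x)) := by
  unfold hdtVal
  rw [foldr_eq_flatMap_Fl, mapply, List.flatMap_assoc]
  rfl

/-- Characterization of the relation computed by `hdtSST`. -/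
lemma hdtSST_rel_iff {A B : Type} {n : ℕ} (hs : Fin n → A → List A)
    (h : A → List B) (v : List A) (u : List (Option (Fin n))) (o : List B) :
    (hdtSST hs h v).Rel u o ↔
      ∃ l : List (Fin n), u = none :: l.map some ∧ o = hdtVal hs h l v := by
  constructor
  · rintro ⟨q, σ, hr, hfin, ho⟩
    cases hr with
    | nil => simp [hdtSST] at hfin
    | @cons q1 q' q2 a u' σ' hδ hr =>
        rcases hδ with ⟨_, ha, hq'⟩ | ⟨hq, _, _⟩
        · subst ha hq'
          obtain ⟨l, hu, -, hσ⟩ := runTrue_subst hs h v hr rfl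
          refine ⟨l, by simp [hu], ?_⟩
          subst hσ ho
          show evalOut (comp ((hdtSST hs h v).rho false none true)
            (fun a => (Fl hs l a).map Sum.inr)) v = hdtVal hs h l v
          rw [comp_none, evalOut_inl, hdtVal_eq]
        · exact absurd hq (by simp [hdtSST])
  · rintro ⟨l, hu, ho⟩
    subst hu ho
    refine ⟨true, _, Run.cons (q := false) (q' := true)
      (Or.inl ⟨rfl, rfl, rfl⟩) (runTrue_exists hs h v l), rfl, ?_⟩
    show hdtVal hs h l v = evalOut (comp ((hdtSST hs h v).rho false none true)
      (fun a => (Fl hs l a).map Sum.inr)) v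
    rw [comp_none, evalOut_inl, hdtVal_eq]

/-- The SSTs T₁ and T₂ built from an HDT0L instance are equivalent iff the
    instance is valid. -/
theorem hdtSST_equiv_iff_valid {A B : Type} {n : ℕ}
    (hs gs : Fin n → A → List A) (h g : A → List B) (v w : List A) :
    (∀ u o, (hdtSST hs h v).Rel u o ↔ (hdtSST gs g w).Rel u o) ↔
      HDT0LValid hs gs h g v w := by
  constructor
  · intro heq l
    have h1 : (hdtSST hs h v).Rel (none :: l.map some) (hdtVal hs h l v) :=
      (hdtSST_rel_iff hs h v _ _).mpr ⟨l, rfl, rfl⟩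
    obtain ⟨l', hu, ho⟩ := (hdtSST_rel_iff gs g w _ _).mp ((heq _ _).mp h1)
    have hl : l = l' := by
      have := (List.cons.injEq _ _ _ _).mp hu
      exact List.map_injective_iff.mpr (Option.some_injective _) this.2
    subst hl
    exact ho
  · intro hval u o
    rw [hdtSST_rel_iff, hdtSST_rel_iff]
    constructor
    · rintro ⟨l, hu, ho⟩; exact ⟨l, hu, ho.trans (hval l)⟩
    · rintro ⟨l, hu, ho⟩; exact ⟨l, hu, ho.trans (hval l).symm⟩

end SSTPaper
end
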